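/- Let ρ be a positive semidefinite matrix and let {Π_μ} be a family of mutually orthogonal projections summing to the identity. If for all μ ≠ ν one has Π_μ √ρ Π_ν √ρ Π_μ = 0, then Π_μ √ρ Π_ν = 0 for all μ ≠ ν; consequently √ρ commutes with each Π_μ and hence ρ commutes with each Π_μ. -/

import Mathlib

open Matrix ComplexOrder
open scoped Kronecker

/-- von Neumann entropy `S(ρ) = -∑ λᵢ log λᵢ` via eigenvalues (0 if not Hermitian). -/
noncomputable def vnEntropy {N : Type*} [Fintype N] [DecidableEq N]
    (A : Matrix N N ℂ) : ℝ :=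
  if h : A.IsHermitian then -∑ i, h.eigenvalues i * Real.log (h.eigenvalues i) else 0

/-- Matrix logarithm via the spectral decomposition (with `Real.log 0 = 0` convention). -/
noncomputable def matLog {N : Type*} [Fintype N] [DecidableEq N]
    (A : Matrix N N ℂ) : Matrix N N ℂ :=
  if h : A.IsHermitian then
    (h.eigenvectorUnitary : Matrix N N ℂ) *
      Matrix.diagonal (fun i => (Real.log (h.eigenvalues i) : ℂ)) *
      star (h.eigenvectorUnitary : Matrix N N ℂ)
  else 0

/-- Positive square root via the spectral decomposition. -/
noncomputable def matSqrt {N : Type*} [Fintype N] [DecidableEq N]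
    (A : Matrix N N ℂ) : Matrix N N ℂ :=
  if h : A.IsHermitian then
    (h.eigenvectorUnitary : Matrix N N ℂ) *
      Matrix.diagonal (fun i => (Real.sqrt (h.eigenvalues i) : ℂ)) *
      star (h.eigenvectorUnitary : Matrix N N ℂ)
  else 0

/-- Inverse square root of a positive definite matrix. -/
noncomputable def matInvSqrt {N : Type*} [Fintype N] [DecidableEq N]
    (A : Matrix N N ℂ) : Matrix N N ℂ :=
  matSqrt A⁻¹

/-- Rank-one projection `|b⟩⟨b|`. -/
noncomputable def proj {n : Type*} (b : n → ℂ) : Matrix n n ℂ :=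
  vecMulVec b (star b)

/-- Partial trace over the second (B) tensor factor. -/
noncomputable def ptraceB {m n : Type*} [Fintype n]
    (ρ : Matrix (m × n) (m × n) ℂ) : Matrix m m ℂ :=
  Matrix.of fun i j => ∑ k, ρ (i, k) (j, k)

/-- Partial trace over the first (A) tensor factor. -/
noncomputable def ptraceA {m n : Type*} [Fintype m]
    (ρ : Matrix (m × n) (m × n) ℂ) : Matrix n n ℂ :=
  Matrix.of fun i j => ∑ k, ρ (k, i) (k, j)

/-- The positive semidefinite square root of a positive semidefinite matrix
(as `Matrix.PosSemidef.sqrt` was defined in Mathlib of December 2024). -/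
noncomputable def Matrix.PosSemidef.sqrt {n 𝕜 : Type*} [Fintype n] [RCLike 𝕜] [DecidableEq n]
    {A : Matrix n n 𝕜} (hA : A.PosSemidef) : Matrix n n 𝕜 :=
  hA.isHermitian.eigenvectorUnitary.1 * diagonal ((↑) ∘ (√·) ∘ hA.isHermitian.eigenvalues) *
    (star hA.isHermitian.eigenvectorUnitary : Matrix n n 𝕜)

theorem Matrix.PosSemidef.sqrt_isHermitian' {n 𝕜 : Type*} [Fintype n] [RCLike 𝕜] [DecidableEq n]
    {A : Matrix n n 𝕜} (hA : A.PosSemidef) : hA.sqrt.IsHermitian := by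
  unfold Matrix.PosSemidef.sqrt
  unfold Matrix.IsHermitian
  rw [Matrix.conjTranspose_mul, Matrix.conjTranspose_mul, Matrix.diagonal_conjTranspose]
  simp only [Matrix.star_eq_conjTranspose, Matrix.conjTranspose_conjTranspose, Matrix.mul_assoc]
  have hd : star ((RCLike.ofReal : ℝ → 𝕜) ∘ (√·) ∘ hA.isHermitian.eigenvalues) =
      (RCLike.ofReal : ℝ → 𝕜) ∘ (√·) ∘ hA.isHermitian.eigenvalues := by
    funext i; simp
  rw [hd]

theorem Matrix.PosSemidef.sq_sqrt' {n 𝕜 : Type*} [Fintype n] [RCLike 𝕜] [DecidableEq n]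
    {A : Matrix n n 𝕜} (hA : A.PosSemidef) : hA.sqrt ^ 2 = A := by
  unfold Matrix.PosSemidef.sqrt
  conv_rhs => rw [hA.isHermitian.spectral_theorem, Unitary.conjStarAlgAut_apply]
  rw [pow_two]
  have hU : (star hA.isHermitian.eigenvectorUnitary : Matrix n n 𝕜) *
      hA.isHermitian.eigenvectorUnitary.1 = 1 := Unitary.coe_star_mul_self _
  simp only [Matrix.mul_assoc]
  rw [← Matrix.mul_assoc (star hA.isHermitian.eigenvectorUnitary : Matrix n n 𝕜), hU,
    Matrix.one_mul, ← Matrix.mul_assoc (diagonal _), Matrix.diagonal_mul_diagonal]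
  congr 3
  ext i
  simp only [Function.comp_apply]
  rw [← RCLike.ofReal_mul, Real.mul_self_sqrt (hA.eigenvalues_nonneg i)]

theorem stmt0 {N : ℕ} {ι : Type*} [Fintype ι]
    (ρ : Matrix (Fin N) (Fin N) ℂ) (hρ : ρ.PosSemidef)
    (P : ι → Matrix (Fin N) (Fin N) ℂ)
    (hherm : ∀ μ, (P μ).IsHermitian)
    (hidem : ∀ μ, P μ * P μ = P μ)
    (horth : ∀ μ ν, μ ≠ ν → P μ * P ν = 0)
    (hsum : ∑ μ, P μ = 1)
    (h : ∀ μ ν, μ ≠ ν → P μ * hρ.sqrt * P ν * hρ.sqrt * P μ = 0) :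
    (∀ μ ν, μ ≠ ν → P μ * hρ.sqrt * P ν = 0) ∧
    (∀ μ, Commute hρ.sqrt (P μ)) ∧ (∀ μ, Commute ρ (P μ)) := by
  have hs : hρ.sqrt.IsHermitian := hρ.sqrt_isHermitian'
  have key : ∀ μ ν, μ ≠ ν → P μ * hρ.sqrt * P ν = 0 := by
    intro μ ν hne
    have hadj : (P μ * hρ.sqrt * P ν)ᴴ = P ν * hρ.sqrt * P μ := by
      simp [Matrix.conjTranspose_mul, (hherm μ).eq, (hherm ν).eq, hs.eq, Matrix.mul_assoc]
    have : (P μ * hρ.sqrt * P ν) * (P μ * hρ.sqrt * P ν)ᴴ = 0 := by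
      rw [hadj]
      have := h μ ν hne
      calc P μ * hρ.sqrt * P ν * (P ν * hρ.sqrt * P μ)
          = P μ * hρ.sqrt * (P ν * P ν) * hρ.sqrt * P μ := by
            simp [Matrix.mul_assoc]
        _ = P μ * hρ.sqrt * P ν * hρ.sqrt * P μ := by rw [hidem ν]
        _ = 0 := this
    exact Matrix.self_mul_conjTranspose_eq_zero.mp this
  have hcomm : ∀ μ, Commute hρ.sqrt (P μ) := by
    intro μ
    have h1 : hρ.sqrt * P μ = P μ * hρ.sqrt * P μ := by
      have : (∑ ν, P ν) * hρ.sqrt * P μ = P μ * hρ.sqrt * P μ := by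
        rw [Finset.sum_mul, Finset.sum_mul]
        rw [Finset.sum_eq_single μ]
        · intro ν _ hne; simp [key ν μ hne]
        · intro hmem; exact absurd (Finset.mem_univ μ) hmem
      rwa [hsum, Matrix.one_mul] at this
    have h2 : P μ * hρ.sqrt = P μ * hρ.sqrt * P μ := by
      have : P μ * hρ.sqrt * (∑ ν, P ν) = P μ * hρ.sqrt * P μ := by
        rw [Finset.mul_sum]
        rw [Finset.sum_eq_single μ]
        · intro ν _ hne; rw [show P μ * hρ.sqrt * P ν = 0 from key μ ν hne.symm]
        · intro hmem; exact absurd (Finset.mem_univ μ) hmem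
      rwa [hsum, Matrix.mul_one] at this
    exact (h1.trans h2.symm)
  refine ⟨key, hcomm, fun μ => ?_⟩
  have : ρ = hρ.sqrt * hρ.sqrt := by rw [← pow_two, hρ.sq_sqrt']
  rw [Commute, SemiconjBy, this, Matrix.mul_assoc, (hcomm μ).eq, ← Matrix.mul_assoc,
    (hcomm μ).eq, Matrix.mul_assoc]
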